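/- Smooth version of the transport identity: let Ω ⊂ ℝⁿ be a bounded domain with smooth boundary, a, u, v, h smooth (a scalar, h vector field), and M = I div h − (∇h)ᵀ − ∇h. Then the pointwise divergence identity holds: a (M∇u)·∇v = ∇·(a∇u)(h·∇v) + ∇·(a∇v)(h·∇u) − (∇u·∇v)(h·∇a) − ∇·[ a (∇u·h)∇v + a (∇v·h)∇u − a (∇u·∇v) h ]. -/

import Mathlib

open scoped RealInnerProductSpace

open Finset

section helpers
variable {n : ℕ}

lemma antisym_sum {n : ℕ} (t : Fin n → Fin n → ℝ) (h : ∀ i j, t i j + t j i = 0) :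
    ∑ i, ∑ j, t i j = 0 := by
  have hs : ∑ i, ∑ j, t i j = ∑ i, ∑ j, t j i := Finset.sum_comm
  have h2 : (∑ i, ∑ j, t i j) + (∑ i, ∑ j, t i j) = 0 := by
    nth_rewrite 2 [hs]
    rw [← Finset.sum_add_distrib]
    simp only [← Finset.sum_add_distrib]
    exact Finset.sum_eq_zero fun i _ => Finset.sum_eq_zero fun j _ => h i j
  linarith

lemma key_alg {n : ℕ} (A : ℝ) (Ai U V H : Fin n → ℝ) (Uij Vij Hij : Fin n → Fin n → ℝ)
    (hU : ∀ i j, Uij i j = Uij j i) (hV : ∀ i j, Vij i j = Vij j i) :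
    A * ((∑ i, Hij i i) * (∑ i, U i * V i)
      - (∑ i, (∑ j, U j * Hij i j) * V i)
      - (∑ i, U i * (∑ j, V j * Hij i j)))
    = (∑ i, (Ai i * U i + A * Uij i i)) * (∑ i, H i * V i)
    + (∑ i, (Ai i * V i + A * Vij i i)) * (∑ i, H i * U i)
    - (∑ i, U i * V i) * (∑ i, H i * Ai i)
    - ∑ i, ((Ai i * (∑ j, U j * H j) + A * (∑ j, (Uij i j * H j + U j * Hij j i))) * V i
          + (A * (∑ j, U j * H j)) * Vij i i
          + (Ai i * (∑ j, V j * H j) + A * (∑ j, (Vij i j * H j + V j * Hij j i))) * U i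
          + (A * (∑ j, V j * H j)) * Uij i i
          - ((Ai i * (∑ j, U j * V j) + A * (∑ j, (Uij i j * V j + U j * Vij i j))) * H i
            + (A * (∑ j, U j * V j)) * Hij i i)) := by
  set L : Fin n → Fin n → ℝ := fun i j =>
    A * (Hij j j * (U i * V i) - U j * Hij i j * V i - U i * (V j * Hij i j)) with hL
  set R : Fin n → Fin n → ℝ := fun i j =>
    (Ai j * U j + A * Uij j j) * (H i * V i) + (Ai j * V j + A * Vij j j) * (H i * U i)
      - (U j * V j) * (H i * Ai i)
      - ((Ai i * (U j * H j) + A * (Uij i j * H j + U j * Hij j i)) * V i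
        + A * (U j * H j) * Vij i i
        + (Ai i * (V j * H j) + A * (Vij i j * H j + V j * Hij j i)) * U i
        + A * (V j * H j) * Uij i i
        - ((Ai i * (U j * V j) + A * (Uij i j * V j + U j * Vij i j)) * H i
          + A * (U j * V j) * Hij i i)) with hR
  have ha : A * ((∑ i, Hij i i) * (∑ i, U i * V i)
      - (∑ i, (∑ j, U j * Hij i j) * V i)
      - (∑ i, U i * (∑ j, V j * Hij i j))) = ∑ i, ∑ j, L i j := by
    simp only [hL, Finset.sum_mul_sum, Finset.sum_mul, Finset.mul_sum,
      ← Finset.sum_sub_distrib]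
  have hb : (∑ i, (Ai i * U i + A * Uij i i)) * (∑ i, H i * V i)
    + (∑ i, (Ai i * V i + A * Vij i i)) * (∑ i, H i * U i)
    - (∑ i, U i * V i) * (∑ i, H i * Ai i)
    - (∑ i, ((Ai i * (∑ j, U j * H j) + A * (∑ j, (Uij i j * H j + U j * Hij j i))) * V i
          + (A * (∑ j, U j * H j)) * Vij i i
          + (Ai i * (∑ j, V j * H j) + A * (∑ j, (Vij i j * H j + V j * Hij j i))) * U i
          + (A * (∑ j, V j * H j)) * Uij i i
          - ((Ai i * (∑ j, U j * V j) + A * (∑ j, (Uij i j * V j + U j * Vij i j))) * H i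
            + (A * (∑ j, U j * V j)) * Hij i i))) = ∑ i, ∑ j, R i j := by
    simp only [hR, Finset.sum_mul_sum, Finset.sum_mul, Finset.mul_sum,
      ← Finset.sum_sub_distrib, ← Finset.sum_add_distrib]
  have hz : (∑ i, ∑ j, R i j) - (∑ i, ∑ j, L i j) = 0 := by
    simp only [← Finset.sum_sub_distrib]
    apply antisym_sum
    intro i j
    simp only [hL, hR]
    rw [hU i j, hV i j]; ring
  linarith [ha, hb, hz]

lemma grad_apply (f : EuclideanSpace ℝ (Fin n) → ℝ) (y : EuclideanSpace ℝ (Fin n)) (i : Fin n) :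
    gradient f y i = fderiv ℝ f y (EuclideanSpace.single i 1) := by
  have h1 : ⟪gradient f y, EuclideanSpace.single i (1:ℝ)⟫ = fderiv ℝ f y (EuclideanSpace.single i 1) :=
    InnerProductSpace.toDual_symm_apply
  rw [← h1, EuclideanSpace.inner_single_right]
  simp

lemma inner_sum' (x y : EuclideanSpace ℝ (Fin n)) : ⟪x, y⟫ = ∑ i, x i * y i := by
  simp [PiLp.inner_apply, RCLike.inner_apply, mul_comm]

lemma clm_coord (L : EuclideanSpace ℝ (Fin n) →L[ℝ] EuclideanSpace ℝ (Fin n))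
    (w : EuclideanSpace ℝ (Fin n)) (i : Fin n) :
    L w i = ∑ j, w j * L (EuclideanSpace.single j 1) i := by
  have hw : w = ∑ j, w j • (EuclideanSpace.single j (1:ℝ)) := by
    have := (EuclideanSpace.basisFun (Fin n) ℝ).toBasis.sum_repr w
    simpa [EuclideanSpace.basisFun_repr] using this.symm
  conv_lhs => rw [hw]
  rw [map_sum, WithLp.ofLp_sum, Finset.sum_apply]
  exact Finset.sum_congr rfl fun j _ => by rw [map_smul]; simp [PiLp.smul_apply]

lemma grad_comp_hasfd (f : EuclideanSpace ℝ (Fin n) → ℝ) (hf : ContDiff ℝ 2 f)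
    (x : EuclideanSpace ℝ (Fin n)) (i : Fin n) :
    HasFDerivAt (fun y => gradient f y i)
      ((fderiv ℝ (fderiv ℝ f) x).flip (EuclideanSpace.single i 1)) x := by
  have hc : DifferentiableAt ℝ (fderiv ℝ f) x :=
    ((hf.fderiv_right (m := 1) (le_refl 2)).differentiable one_ne_zero).differentiableAt
  have h1 : HasFDerivAt (fun y => (fderiv ℝ f y) (EuclideanSpace.single i (1:ℝ)))
      ((fderiv ℝ (fderiv ℝ f) x).flip (EuclideanSpace.single i 1)) x := by
    have := hc.hasFDerivAt.clm_apply (hasFDerivAt_const (EuclideanSpace.single i (1:ℝ)) x)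
    simpa using this
  have : (fun y => gradient f y i) = fun y => (fderiv ℝ f y) (EuclideanSpace.single i 1) :=
    funext fun y => grad_apply f y i
  rw [this]
  exact h1

lemma grad_comp_diff (f : EuclideanSpace ℝ (Fin n) → ℝ) (hf : ContDiff ℝ 2 f)
    (x : EuclideanSpace ℝ (Fin n)) (i : Fin n) :
    DifferentiableAt ℝ (fun y => gradient f y i) x :=
  (grad_comp_hasfd f hf x i).differentiableAt

lemma grad_comp_fderiv (f : EuclideanSpace ℝ (Fin n) → ℝ) (hf : ContDiff ℝ 2 f)
    (x w : EuclideanSpace ℝ (Fin n)) (i : Fin n) :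
    fderiv ℝ (fun y => gradient f y i) x w
      = fderiv ℝ (fderiv ℝ f) x w (EuclideanSpace.single i 1) := by
  rw [(grad_comp_hasfd f hf x i).fderiv]
  rfl

lemma hcomp_hasfd (h : EuclideanSpace ℝ (Fin n) → EuclideanSpace ℝ (Fin n))
    (hh : ContDiff ℝ 2 h) (x : EuclideanSpace ℝ (Fin n)) (j : Fin n) :
    HasFDerivAt (fun y => h y j) ((EuclideanSpace.proj j).comp (fderiv ℝ h x)) x := by
  have := (EuclideanSpace.proj (𝕜 := ℝ) j).hasFDerivAt.comp x (hh.differentiable two_ne_zero x).hasFDerivAt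
  exact this

lemma hcomp_diff (h : EuclideanSpace ℝ (Fin n) → EuclideanSpace ℝ (Fin n))
    (hh : ContDiff ℝ 2 h) (x : EuclideanSpace ℝ (Fin n)) (j : Fin n) :
    DifferentiableAt ℝ (fun y => h y j) x := (hcomp_hasfd h hh x j).differentiableAt

lemma hcomp_fderiv (h : EuclideanSpace ℝ (Fin n) → EuclideanSpace ℝ (Fin n))
    (hh : ContDiff ℝ 2 h) (x w : EuclideanSpace ℝ (Fin n)) (j : Fin n) :
    fderiv ℝ (fun y => h y j) x w = fderiv ℝ h x w j := by
  rw [(hcomp_hasfd h hh x j).fderiv]; rfl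

end helpers


/-- Pointwise divergence-form identity underlying Lemma 5.1:
a(M∇u)·∇v = ∇·(a∇u)(h·∇v) + ∇·(a∇v)(h·∇u) − (∇u·∇v)(h·∇a)
            − ∇·[a(∇u·h)∇v + a(∇v·h)∇u − a(∇u·∇v)h]. -/
theorem stmt_12 {n : ℕ}
    (a u v : EuclideanSpace ℝ (Fin n) → ℝ)
    (h : EuclideanSpace ℝ (Fin n) → EuclideanSpace ℝ (Fin n))
    (ha : ContDiff ℝ 2 a) (hu : ContDiff ℝ 2 u) (hv : ContDiff ℝ 2 v)
    (hh : ContDiff ℝ 2 h) (x : EuclideanSpace ℝ (Fin n)) :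
    a x * ((∑ i, fderiv ℝ h x (EuclideanSpace.single i 1) i)
            * ⟪gradient u x, gradient v x⟫
          - ⟪fderiv ℝ h x (gradient u x), gradient v x⟫
          - ⟪gradient u x, fderiv ℝ h x (gradient v x)⟫)
      = (∑ i, fderiv ℝ (fun y => a y * gradient u y i) x (EuclideanSpace.single i 1))
          * ⟪h x, gradient v x⟫
        + (∑ i, fderiv ℝ (fun y => a y * gradient v y i) x (EuclideanSpace.single i 1))
          * ⟪h x, gradient u x⟫
        - ⟪gradient u x, gradient v x⟫ * ⟪h x, gradient a x⟫
        - ∑ i, fderiv ℝ (fun y =>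
            (a y * ⟪gradient u y, h y⟫) * gradient v y i
            + (a y * ⟪gradient v y, h y⟫) * gradient u y i
            - (a y * ⟪gradient u y, gradient v y⟫) * h y i) x
            (EuclideanSpace.single i 1) := by
  classical
  set e : Fin n → EuclideanSpace ℝ (Fin n) := fun i => EuclideanSpace.single i 1 with he
  set A : ℝ := a x with hA
  set Ai : Fin n → ℝ := fun i => fderiv ℝ a x (e i) with hAi
  set U : Fin n → ℝ := fun i => fderiv ℝ u x (e i) with hU
  set V : Fin n → ℝ := fun i => fderiv ℝ v x (e i) with hV
  set H : Fin n → ℝ := fun i => h x i with hH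
  set Uij : Fin n → Fin n → ℝ := fun i j => fderiv ℝ (fderiv ℝ u) x (e i) (e j) with hUij
  set Vij : Fin n → Fin n → ℝ := fun i j => fderiv ℝ (fderiv ℝ v) x (e i) (e j) with hVij
  set Hij : Fin n → Fin n → ℝ := fun i j => fderiv ℝ h x (e j) i with hHij
  -- differentiability
  have da : DifferentiableAt ℝ a x := (ha.differentiable two_ne_zero).differentiableAt
  have dgu : ∀ j, DifferentiableAt ℝ (fun y => gradient u y j) x := grad_comp_diff u hu x
  have dgv : ∀ j, DifferentiableAt ℝ (fun y => gradient v y j) x := grad_comp_diff v hv x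
  have dhj : ∀ j, DifferentiableAt ℝ (fun y => h y j) x := hcomp_diff h hh x
  -- inner products as sums
  have euv : (fun y => ⟪gradient u y, gradient v y⟫) = fun y => ∑ j, gradient u y j * gradient v y j :=
    funext fun y => inner_sum' _ _
  have euh : (fun y => ⟪gradient u y, h y⟫) = fun y => ∑ j, gradient u y j * h y j :=
    funext fun y => inner_sum' _ _
  have evh : (fun y => ⟪gradient v y, h y⟫) = fun y => ∑ j, gradient v y j * h y j :=
    funext fun y => inner_sum' _ _
  have dSuh : DifferentiableAt ℝ (fun y => ⟪gradient u y, h y⟫) x := by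
    rw [euh]; exact DifferentiableAt.fun_sum fun j _ => (dgu j).mul (dhj j)
  have dSvh : DifferentiableAt ℝ (fun y => ⟪gradient v y, h y⟫) x := by
    rw [evh]; exact DifferentiableAt.fun_sum fun j _ => (dgv j).mul (dhj j)
  have dSuv : DifferentiableAt ℝ (fun y => ⟪gradient u y, gradient v y⟫) x := by
    rw [euv]; exact DifferentiableAt.fun_sum fun j _ => (dgu j).mul (dgv j)
  -- derivative of sums
  have fSuh : ∀ i, fderiv ℝ (fun y => ⟪gradient u y, h y⟫) x (e i)
      = ∑ j, (Uij i j * H j + U j * Hij j i) := by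
    intro i
    rw [euh, fderiv_fun_sum (fun j _ => (dgu j).fun_mul (dhj j)), ContinuousLinearMap.sum_apply]
    refine Finset.sum_congr rfl fun j _ => ?_
    rw [fderiv_fun_mul (dgu j) (dhj j), ContinuousLinearMap.add_apply,
      ContinuousLinearMap.smul_apply, ContinuousLinearMap.smul_apply,
      grad_comp_fderiv u hu x (e i) j, hcomp_fderiv h hh x (e i) j, grad_apply]
    simp only [smul_eq_mul, hUij, hH, hHij, hU]
    ring
  have fSvh : ∀ i, fderiv ℝ (fun y => ⟪gradient v y, h y⟫) x (e i)
      = ∑ j, (Vij i j * H j + V j * Hij j i) := by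
    intro i
    rw [evh, fderiv_fun_sum (fun j _ => (dgv j).fun_mul (dhj j)), ContinuousLinearMap.sum_apply]
    refine Finset.sum_congr rfl fun j _ => ?_
    rw [fderiv_fun_mul (dgv j) (dhj j), ContinuousLinearMap.add_apply,
      ContinuousLinearMap.smul_apply, ContinuousLinearMap.smul_apply,
      grad_comp_fderiv v hv x (e i) j, hcomp_fderiv h hh x (e i) j, grad_apply]
    simp only [smul_eq_mul, hVij, hH, hHij, hV]
    ring
  have fSuv : ∀ i, fderiv ℝ (fun y => ⟪gradient u y, gradient v y⟫) x (e i)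
      = ∑ j, (Uij i j * V j + U j * Vij i j) := by
    intro i
    rw [euv, fderiv_fun_sum (fun j _ => (dgu j).fun_mul (dgv j)), ContinuousLinearMap.sum_apply]
    refine Finset.sum_congr rfl fun j _ => ?_
    rw [fderiv_fun_mul (dgu j) (dgv j), ContinuousLinearMap.add_apply,
      ContinuousLinearMap.smul_apply, ContinuousLinearMap.smul_apply,
      grad_comp_fderiv u hu x (e i) j, grad_comp_fderiv v hv x (e i) j,
      grad_apply, grad_apply]
    simp only [smul_eq_mul, hUij, hVij, hU, hV]
    ring
  -- inner product values at x
  have vuh : ⟪gradient u x, h x⟫ = ∑ j, U j * H j := by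
    rw [inner_sum']; exact Finset.sum_congr rfl fun j _ => by rw [grad_apply]
  have vvh : ⟪gradient v x, h x⟫ = ∑ j, V j * H j := by
    rw [inner_sum']; exact Finset.sum_congr rfl fun j _ => by rw [grad_apply]
  have vuv : ⟪gradient u x, gradient v x⟫ = ∑ j, U j * V j := by
    rw [inner_sum']; exact Finset.sum_congr rfl fun j _ => by rw [grad_apply, grad_apply]
  have vhv : ⟪h x, gradient v x⟫ = ∑ j, H j * V j := by
    rw [inner_sum']; exact Finset.sum_congr rfl fun j _ => by rw [grad_apply]
  have vhu : ⟪h x, gradient u x⟫ = ∑ j, H j * U j := by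
    rw [inner_sum']; exact Finset.sum_congr rfl fun j _ => by rw [grad_apply]
  have vha : ⟪h x, gradient a x⟫ = ∑ j, H j * Ai j := by
    rw [inner_sum']; exact Finset.sum_congr rfl fun j _ => by rw [grad_apply]
  -- divergence terms
  have div_u : ∀ i, fderiv ℝ (fun y => a y * gradient u y i) x (e i)
      = Ai i * U i + A * Uij i i := by
    intro i
    rw [fderiv_fun_mul da (dgu i), ContinuousLinearMap.add_apply,
      ContinuousLinearMap.smul_apply, ContinuousLinearMap.smul_apply,
      grad_comp_fderiv u hu x (e i) i, grad_apply]
    simp only [smul_eq_mul, hUij, hU, hAi, hA]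
    ring
  have div_v : ∀ i, fderiv ℝ (fun y => a y * gradient v y i) x (e i)
      = Ai i * V i + A * Vij i i := by
    intro i
    rw [fderiv_fun_mul da (dgv i), ContinuousLinearMap.add_apply,
      ContinuousLinearMap.smul_apply, ContinuousLinearMap.smul_apply,
      grad_comp_fderiv v hv x (e i) i, grad_apply]
    simp only [smul_eq_mul, hVij, hV, hAi, hA]
    ring
  -- big fourth term
  have big : ∀ i, fderiv ℝ (fun y =>
        (a y * ⟪gradient u y, h y⟫) * gradient v y i
        + (a y * ⟪gradient v y, h y⟫) * gradient u y i
        - (a y * ⟪gradient u y, gradient v y⟫) * h y i) x (e i)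
      = (Ai i * (∑ j, U j * H j) + A * (∑ j, (Uij i j * H j + U j * Hij j i))) * V i
        + (A * (∑ j, U j * H j)) * Vij i i
        + (Ai i * (∑ j, V j * H j) + A * (∑ j, (Vij i j * H j + V j * Hij j i))) * U i
        + (A * (∑ j, V j * H j)) * Uij i i
        - ((Ai i * (∑ j, U j * V j) + A * (∑ j, (Uij i j * V j + U j * Vij i j))) * H i
          + (A * (∑ j, U j * V j)) * Hij i i) := by
    intro i
    have dP1 : DifferentiableAt ℝ (fun y => a y * ⟪gradient u y, h y⟫) x := da.mul dSuh
    have dP2 : DifferentiableAt ℝ (fun y => a y * ⟪gradient v y, h y⟫) x := da.mul dSvh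
    have dP3 : DifferentiableAt ℝ (fun y => a y * ⟪gradient u y, gradient v y⟫) x := da.mul dSuv
    have dT1 : DifferentiableAt ℝ (fun y => (a y * ⟪gradient u y, h y⟫) * gradient v y i) x :=
      dP1.mul (dgv i)
    have dT2 : DifferentiableAt ℝ (fun y => (a y * ⟪gradient v y, h y⟫) * gradient u y i) x :=
      dP2.mul (dgu i)
    have dT3 : DifferentiableAt ℝ (fun y => (a y * ⟪gradient u y, gradient v y⟫) * h y i) x :=
      dP3.mul (dhj i)
    rw [fderiv_fun_sub (dT1.fun_add dT2) dT3, fderiv_fun_add dT1 dT2, ContinuousLinearMap.sub_apply,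
      ContinuousLinearMap.add_apply]
    rw [fderiv_fun_mul dP1 (dgv i), fderiv_fun_mul dP2 (dgu i), fderiv_fun_mul dP3 (dhj i)]
    simp only [ContinuousLinearMap.add_apply, ContinuousLinearMap.smul_apply, smul_eq_mul]
    rw [fderiv_fun_mul da dSuh, fderiv_fun_mul da dSvh, fderiv_fun_mul da dSuv]
    simp only [ContinuousLinearMap.add_apply, ContinuousLinearMap.smul_apply, smul_eq_mul]
    rw [fSuh i, fSvh i, fSuv i, vuh, vvh, vuv,
      grad_comp_fderiv u hu x (e i) i, grad_comp_fderiv v hv x (e i) i,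
      hcomp_fderiv h hh x (e i) i, grad_apply, grad_apply]
    simp only [hUij, hVij, hHij, hU, hV, hH, hA, hAi]
    ring
  -- symmetry of Hessians
  have symU : ∀ i j, Uij i j = Uij j i := fun i j =>
    (hu.contDiffAt.isSymmSndFDerivAt (by simp [minSmoothness_of_isRCLikeNormedField])) (e i) (e j)
  have symV : ∀ i j, Vij i j = Vij j i := fun i j =>
    (hv.contDiffAt.isSymmSndFDerivAt (by simp [minSmoothness_of_isRCLikeNormedField])) (e i) (e j)
  -- assemble
  have lhs2 : ⟪fderiv ℝ h x (gradient u x), gradient v x⟫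
      = ∑ i, (∑ j, U j * Hij i j) * V i := by
    rw [inner_sum']
    refine Finset.sum_congr rfl fun i _ => ?_
    rw [clm_coord, grad_apply]
    congr 1
    exact Finset.sum_congr rfl fun j _ => by rw [grad_apply]
  have lhs3 : ⟪gradient u x, fderiv ℝ h x (gradient v x)⟫
      = ∑ i, U i * (∑ j, V j * Hij i j) := by
    rw [inner_sum']
    refine Finset.sum_congr rfl fun i _ => ?_
    rw [clm_coord, grad_apply]
    congr 1
    exact Finset.sum_congr rfl fun j _ => by rw [grad_apply]
  calc a x * ((∑ i, fderiv ℝ h x (e i) i) * ⟪gradient u x, gradient v x⟫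
          - ⟪fderiv ℝ h x (gradient u x), gradient v x⟫
          - ⟪gradient u x, fderiv ℝ h x (gradient v x)⟫)
      = A * ((∑ i, Hij i i) * (∑ i, U i * V i)
          - (∑ i, (∑ j, U j * Hij i j) * V i)
          - (∑ i, U i * (∑ j, V j * Hij i j))) := by
        rw [vuv, lhs2, lhs3]
    _ = (∑ i, (Ai i * U i + A * Uij i i)) * (∑ i, H i * V i)
        + (∑ i, (Ai i * V i + A * Vij i i)) * (∑ i, H i * U i)
        - (∑ i, U i * V i) * (∑ i, H i * Ai i)
        - ∑ i, ((Ai i * (∑ j, U j * H j) + A * (∑ j, (Uij i j * H j + U j * Hij j i))) * V i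
              + (A * (∑ j, U j * H j)) * Vij i i
              + (Ai i * (∑ j, V j * H j) + A * (∑ j, (Vij i j * H j + V j * Hij j i))) * U i
              + (A * (∑ j, V j * H j)) * Uij i i
              - ((Ai i * (∑ j, U j * V j) + A * (∑ j, (Uij i j * V j + U j * Vij i j))) * H i
                + (A * (∑ j, U j * V j)) * Hij i i)) :=
      key_alg A Ai U V H Uij Vij Hij symU symV
    _ = (∑ i, fderiv ℝ (fun y => a y * gradient u y i) x (e i)) * ⟪h x, gradient v x⟫
        + (∑ i, fderiv ℝ (fun y => a y * gradient v y i) x (e i)) * ⟪h x, gradient u x⟫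
        - ⟪gradient u x, gradient v x⟫ * ⟪h x, gradient a x⟫
        - ∑ i, fderiv ℝ (fun y =>
            (a y * ⟪gradient u y, h y⟫) * gradient v y i
            + (a y * ⟪gradient v y, h y⟫) * gradient u y i
            - (a y * ⟪gradient u y, gradient v y⟫) * h y i) x (e i) := by
        rw [vhv, vhu, vuv, vha,
          Finset.sum_congr rfl (fun i _ => div_u i),
          Finset.sum_congr rfl (fun i _ => div_v i),
          Finset.sum_congr rfl (fun i _ => big i)]
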